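/- Let ρ be an irreducible complex representation of a finite group G. Then the eigenvalues of the operator A := (1/|G|) ∑_{g ∈ G} ρ(g) ⊗ ρ(g⁻¹) are contained in {1/d_ρ, -1/d_ρ}, where d_ρ is the dimension of ρ. -/

import Mathlib

open Kronecker

section AuxSpecAvg

variable {G : Type*} [Group G] [Fintype G] {d : ℕ}

omit [Fintype G] in
/-- Schur's lemma: a matrix commuting with all `ρ g` is scalar. -/
private lemma schur_aux' (ρ : G →* Matrix (Fin d) (Fin d) ℂ)
    (hρirr : ∀ W : Submodule ℂ (Fin d → ℂ),
      (∀ g : G, ∀ v ∈ W, (ρ g).mulVec v ∈ W) → W = ⊥ ∨ W = ⊤)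
    (hd : 0 < d) (M : Matrix (Fin d) (Fin d) ℂ)
    (hM : ∀ g, ρ g * M = M * ρ g) :
    M = (M.trace / d) • 1 := by
  haveI : Nonempty (Fin d) := ⟨⟨0, hd⟩⟩
  obtain ⟨μ, hμ⟩ := Module.End.exists_eigenvalue (Matrix.toLin' M)
  have hW : ∀ g : G, ∀ v ∈ Module.End.eigenspace (Matrix.toLin' M) μ,
      (ρ g).mulVec v ∈ Module.End.eigenspace (Matrix.toLin' M) μ := by
    intro g v hv
    rw [Module.End.mem_eigenspace_iff] at hv ⊢
    rw [Matrix.toLin'_apply] at hv ⊢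
    rw [Matrix.mulVec_mulVec, ← hM, ← Matrix.mulVec_mulVec, hv, Matrix.mulVec_smul]
  rcases hρirr _ hW with h | h
  · exact absurd h hμ
  · have hMv : ∀ v, M.mulVec v = μ • v := by
      intro v
      have hv : v ∈ Module.End.eigenspace (Matrix.toLin' M) μ := h ▸ Submodule.mem_top
      rw [Module.End.mem_eigenspace_iff, Matrix.toLin'_apply] at hv
      exact hv
    have hM1 : M = μ • 1 := by
      ext i j
      have := congrFun (hMv (Pi.single j 1)) i
      simp only [Matrix.mulVec_single, MulOpposite.op_one, one_smul, Matrix.col_apply, mul_one] at this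
      simp [this, Matrix.one_apply, Pi.single_apply, mul_ite, eq_comm]
    have hd' : (d : ℂ) ≠ 0 := Nat.cast_ne_zero.mpr hd.ne'
    rw [hM1]
    congr 1
    rw [Matrix.trace_smul, Matrix.trace_one]
    field_simp
    rw [Fintype.card_fin, smul_eq_mul]

/-- Averaged conjugation is `(|G| tr X / d) • 1`. -/
private lemma avg_aux' (ρ : G →* Matrix (Fin d) (Fin d) ℂ)
    (hρirr : ∀ W : Submodule ℂ (Fin d → ℂ),
      (∀ g : G, ∀ v ∈ W, (ρ g).mulVec v ∈ W) → W = ⊥ ∨ W = ⊤)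
    (hd : 0 < d) (X : Matrix (Fin d) (Fin d) ℂ) :
    ∑ g : G, ρ g * X * ρ g⁻¹ = ((Fintype.card G : ℂ) * X.trace / d) • 1 := by
  have hM : ∀ h : G, ρ h * (∑ g : G, ρ g * X * ρ g⁻¹) = (∑ g : G, ρ g * X * ρ g⁻¹) * ρ h := by
    intro h
    rw [Finset.mul_sum, Finset.sum_mul]
    refine Fintype.sum_equiv (Equiv.mulLeft h) _ _ ?_
    intro g
    have h1 : ρ h⁻¹ * ρ h = 1 := by rw [← map_mul, inv_mul_cancel, map_one]
    simp only [Equiv.coe_mulLeft, map_mul, mul_inv_rev]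
    calc ρ h * (ρ g * X * ρ g⁻¹) = ρ h * ρ g * X * (ρ g⁻¹ * (ρ h⁻¹ * ρ h)) := by
          rw [h1, mul_one]; noncomm_ring
      _ = ρ h * ρ g * X * (ρ g⁻¹ * ρ h⁻¹) * ρ h := by noncomm_ring
  have key := schur_aux' ρ hρirr hd _ hM
  rw [key]
  congr 2
  rw [Matrix.trace_sum]
  have : ∀ g : G, (ρ g * X * ρ g⁻¹).trace = X.trace := by
    intro g
    rw [Matrix.trace_mul_cycle, ← map_mul, inv_mul_cancel, map_one, one_mul]
  rw [Finset.sum_congr rfl fun g _ => this g, Finset.sum_const, Finset.card_univ,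
    nsmul_eq_mul]

/-- Schur orthogonality relations. -/
private lemma orth_aux' (ρ : G →* Matrix (Fin d) (Fin d) ℂ)
    (avg : ∀ X : Matrix (Fin d) (Fin d) ℂ,
      ∑ g : G, ρ g * X * ρ g⁻¹ = ((Fintype.card G : ℂ) * X.trace / d) • 1)
    (a b i j : Fin d) :
    ∑ g : G, ρ g i a * ρ g⁻¹ b j
      = ((Fintype.card G : ℂ) / d) * ((if a = b then 1 else 0) * (if i = j then 1 else 0)) := by
  have h := congrFun (congrFun (avg (Matrix.single a b (1:ℂ))) i) j
  have hterm : ∀ g : G, (ρ g * Matrix.single a b (1:ℂ) * ρ g⁻¹) i j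
      = ρ g i a * ρ g⁻¹ b j := by
    intro g
    simp [Matrix.mul_apply, Matrix.single, Matrix.of_apply, ite_mul, mul_ite,
      ite_and, Finset.sum_ite_eq, Finset.sum_ite_eq', Finset.mul_sum, Finset.sum_mul]
  have htr : (Matrix.single a b (1:ℂ)).trace = if a = b then 1 else 0 := by
    by_cases hab : a = b
    · subst hab; simp
    · rw [Matrix.trace_single_eq_of_ne a b (1:ℂ) hab]
      simp [hab]
  rw [Matrix.sum_apply] at h
  rw [Finset.sum_congr rfl fun g _ => hterm g] at h
  rw [htr] at h
  rw [h]
  simp only [Matrix.smul_apply, Matrix.one_apply, smul_eq_mul]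
  split <;> split <;> simp

/-- The weighted character sum is scalar. -/
private lemma charsum_aux' (ρ : G →* Matrix (Fin d) (Fin d) ℂ)
    (orth : ∀ a b i j : Fin d, ∑ g : G, ρ g i a * ρ g⁻¹ b j
      = ((Fintype.card G : ℂ) / d) * ((if a = b then 1 else 0) * (if i = j then 1 else 0))) :
    ∑ k : G, (ρ k⁻¹).trace • ρ k = ((Fintype.card G : ℂ) / d) • 1 := by
  ext i j
  rw [Matrix.sum_apply]
  calc ∑ k : G, ((ρ k⁻¹).trace • ρ k) i j
      = ∑ k : G, ∑ p : Fin d, ρ k i j * ρ k⁻¹ p p := by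
        refine Finset.sum_congr rfl fun k _ => ?_
        simp [Matrix.trace, Matrix.diag, Finset.sum_mul, Finset.mul_sum, mul_comm]
    _ = ∑ p : Fin d, ∑ k : G, ρ k i j * ρ k⁻¹ p p := Finset.sum_comm
    _ = ∑ p : Fin d, ((Fintype.card G : ℂ) / d) *
          ((if j = p then 1 else 0) * (if i = p then 1 else 0)) := by
        refine Finset.sum_congr rfl fun p _ => orth j p i p
    _ = (((Fintype.card G : ℂ) / d) • (1 : Matrix (Fin d) (Fin d) ℂ)) i j := by
        simp [Matrix.one_apply, mul_ite, ite_and, Finset.sum_ite_eq, Finset.sum_ite_eq', eq_comm]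

omit [Group G] [Fintype G] in
private lemma sumK' {s : Finset G} (A : G → Matrix (Fin d) (Fin d) ℂ)
    (B : Matrix (Fin d) (Fin d) ℂ) :
    (∑ x ∈ s, A x) ⊗ₖ B = ∑ x ∈ s, (A x) ⊗ₖ B := by
  ext ⟨i, j⟩ ⟨k, l⟩
  simp [Matrix.sum_apply, Finset.sum_mul]

omit [Group G] [Fintype G] in
private lemma sumK'' {s : Finset G} (A : Matrix (Fin d) (Fin d) ℂ)
    (B : G → Matrix (Fin d) (Fin d) ℂ) :
    A ⊗ₖ (∑ x ∈ s, B x) = ∑ x ∈ s, A ⊗ₖ (B x) := by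
  ext ⟨i, j⟩ ⟨k, l⟩
  simp [Matrix.sum_apply, Finset.mul_sum]

/-- The square of the summed Kronecker operator. -/
private lemma sq_aux' (ρ : G →* Matrix (Fin d) (Fin d) ℂ)
    (avg : ∀ X : Matrix (Fin d) (Fin d) ℂ,
      ∑ g : G, ρ g * X * ρ g⁻¹ = ((Fintype.card G : ℂ) * X.trace / d) • 1)
    (N : ∑ k : G, (ρ k⁻¹).trace • ρ k = ((Fintype.card G : ℂ) / d) • 1) :
    (∑ g : G, ρ g ⊗ₖ ρ g⁻¹) * (∑ g : G, ρ g ⊗ₖ ρ g⁻¹)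
      = (((Fintype.card G : ℂ) / d) ^ 2) • 1 := by
  rw [Finset.sum_mul_sum]
  calc ∑ g : G, ∑ h : G, (ρ g ⊗ₖ ρ g⁻¹) * (ρ h ⊗ₖ ρ h⁻¹)
      = ∑ g : G, ∑ k : G, ρ k ⊗ₖ ρ (g⁻¹ * k⁻¹ * g) := by
        refine Finset.sum_congr rfl fun g _ => ?_
        refine Fintype.sum_equiv (Equiv.mulLeft g) _ _ fun h => ?_
        rw [← Matrix.mul_kronecker_mul, ← map_mul, ← map_mul]
        simp only [Equiv.coe_mulLeft]
        group
    _ = ∑ k : G, ∑ g : G, ρ k ⊗ₖ ρ (g⁻¹ * k⁻¹ * g) := Finset.sum_comm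
    _ = ∑ k : G, ρ k ⊗ₖ (∑ g : G, ρ g * ρ k⁻¹ * ρ g⁻¹) := by
        refine Finset.sum_congr rfl fun k _ => ?_
        rw [sumK'']
        refine Fintype.sum_equiv (Equiv.inv G) _ _ fun g => ?_
        simp [map_mul]
    _ = ∑ k : G, ρ k ⊗ₖ (((Fintype.card G : ℂ) * (ρ k⁻¹).trace / d) • 1) := by
        refine Finset.sum_congr rfl fun k _ => ?_
        rw [avg (ρ k⁻¹)]
    _ = ((Fintype.card G : ℂ) / d) • ((∑ k : G, (ρ k⁻¹).trace • ρ k) ⊗ₖ 1) := by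
        rw [sumK', Finset.smul_sum]
        refine Finset.sum_congr rfl fun k _ => ?_
        rw [Matrix.kronecker_smul, Matrix.smul_kronecker, smul_smul]
        congr 1
        ring
    _ = (((Fintype.card G : ℂ) / d) ^ 2) • 1 := by
        rw [N, Matrix.smul_kronecker, Matrix.one_kronecker_one, smul_smul, sq]

end AuxSpecAvg

open Kronecker in
/-- The eigenvalues of the average of `ρ(g) ⊗ ρ(g⁻¹)` over a finite group `G`,
for an irreducible unitary representation `ρ` of dimension `d`, lie in `{1/d, -1/d}`. -/
theorem spectrum_average_kronecker_rep_antirep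
    {G : Type*} [Group G] [Fintype G] {d : ℕ}
    (ρ : G →* Matrix (Fin d) (Fin d) ℂ)
    (hρu : ∀ g, ρ g ∈ Matrix.unitaryGroup (Fin d) ℂ)
    (hρirr : ∀ W : Submodule ℂ (Fin d → ℂ),
      (∀ g : G, ∀ v ∈ W, (ρ g).mulVec v ∈ W) → W = ⊥ ∨ W = ⊤) :
    spectrum ℂ ((Fintype.card G : ℂ)⁻¹ • ∑ g : G, (ρ g) ⊗ₖ (ρ g⁻¹))
      ⊆ {(d : ℂ)⁻¹, -(d : ℂ)⁻¹} := by
  rcases Nat.eq_zero_or_pos d with hd | hd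
  · subst hd
    intro z hz
    rw [spectrum.mem_iff] at hz
    haveI : Subsingleton (Matrix (Fin 0 × Fin 0) (Fin 0 × Fin 0) ℂ) :=
      ⟨fun a b => by ext ⟨i, _⟩ _; exact i.elim0⟩
    exact (hz (isUnit_of_subsingleton _)).elim
  · have avg := avg_aux' ρ hρirr hd
    have orth := orth_aux' ρ avg
    have N := charsum_aux' ρ orth
    have SS := sq_aux' ρ avg N
    have hn : (Fintype.card G : ℂ) ≠ 0 := Nat.cast_ne_zero.mpr Fintype.card_ne_zero
    have hd' : (d : ℂ) ≠ 0 := Nat.cast_ne_zero.mpr hd.ne'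
    set A : Matrix (Fin d × Fin d) (Fin d × Fin d) ℂ :=
      (Fintype.card G : ℂ)⁻¹ • ∑ g : G, (ρ g) ⊗ₖ (ρ g⁻¹) with hA
    have hA2 : A * A = ((d : ℂ)⁻¹ ^ 2) • (1 : Matrix (Fin d × Fin d) (Fin d × Fin d) ℂ) := by
      rw [hA, smul_mul_smul_comm, SS, smul_smul]
      congr 1
      field_simp
    intro z hz
    rw [spectrum.mem_iff] at hz
    by_contra hmem
    simp only [Set.mem_insert_iff, Set.mem_singleton_iff, not_or] at hmem
    obtain ⟨h1, h2⟩ := hmem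
    apply hz
    set C : Matrix (Fin d × Fin d) (Fin d × Fin d) ℂ := algebraMap ℂ _ z with hC
    have hζ : z ^ 2 - ((d : ℂ)⁻¹) ^ 2 ≠ 0 := by
      rw [sq_sub_sq]
      exact mul_ne_zero (fun h => h2 (by linear_combination h)) (sub_ne_zero.mpr h1)
    have hcomm : C * A = A * C := by rw [hC]; exact Algebra.commutes z A
    have hC1 : C = z • (1 : Matrix (Fin d × Fin d) (Fin d × Fin d) ℂ) := by
      rw [hC, Algebra.algebraMap_eq_smul_one]
    have expand : (C - A) * (C + A) = algebraMap ℂ _ (z ^ 2 - ((d : ℂ)⁻¹) ^ 2) := by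
      have e1 : (C - A) * (C + A) = C * C + C * A - A * C - A * A := by noncomm_ring
      rw [e1, hcomm]
      have e2 : C * C + A * C - A * C - A * A = C * C - A * A := by abel
      rw [e2, hA2, hC1, Algebra.algebraMap_eq_smul_one, smul_mul_smul_comm, mul_one,
        ← sub_smul]
      congr 1
      ring
    have expand' : (C + A) * (C - A) = algebraMap ℂ _ (z ^ 2 - ((d : ℂ)⁻¹) ^ 2) := by
      have e1 : (C + A) * (C - A) = C * C - C * A + A * C - A * A := by noncomm_ring
      rw [e1, hcomm]
      have e2 : C * C - A * C + A * C - A * A = C * C - A * A := by abel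
      rw [e2, hA2, hC1, Algebra.algebraMap_eq_smul_one, smul_mul_smul_comm, mul_one,
        ← sub_smul]
      congr 1
      ring
    set w : Matrix (Fin d × Fin d) (Fin d × Fin d) ℂ :=
      (C + A) * algebraMap ℂ _ ((z ^ 2 - ((d : ℂ)⁻¹) ^ 2)⁻¹) with hw
    have hr : (C - A) * w = 1 := by
      rw [hw, ← mul_assoc, expand, ← map_mul, mul_inv_cancel₀ hζ, map_one]
    have hl : w * (C - A) = 1 := by
      rw [hw, mul_assoc, Algebra.commutes, ← mul_assoc, expand', ← map_mul,
        mul_inv_cancel₀ hζ, map_one]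
    exact ⟨⟨C - A, w, hr, hl⟩, rfl⟩
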